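/- arXiv:gr-qc/0302021 — 5 statements merged into one kernel-verified Lean document; each statement's English description precedes it below -/
import Mathlib

section
/- Let Λ > 0 and α satisfy 0 < α ≤ 1/4 and 2α²/Λ < 1, and let k satisfy 0 ≤ k ≤ 1. Then the strict discriminant inequality 2α²Λ⁻¹(1 − k)² − 4(2α − k/2)(1 − 2α − k/2) < 0 holds if and only if k < 1 − (1 − 4α)/√(1 − 2Λ⁻¹α²). -/
/-- The strict discriminant inequality
`2α²Λ⁻¹(1 − k)² − 4(2α − k/2)(1 − 2α − k/2) < 0`
holds iff `k < 1 − (1 − 4α)/√(1 − 2Λ⁻¹α²)`. -/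
theorem discriminant_lt_iff (Λ α k : ℝ) (hΛ : 0 < Λ)
    (hα0 : 0 < α) (hα1 : α ≤ 1 / 4) (hαΛ : 2 * α ^ 2 / Λ < 1)
    (hk0 : 0 ≤ k) (hk1 : k ≤ 1) :
    2 * α ^ 2 * Λ⁻¹ * (1 - k) ^ 2 - 4 * (2 * α - k / 2) * (1 - 2 * α - k / 2) < 0 ↔
      k < 1 - (1 - 4 * α) / Real.sqrt (1 - 2 * Λ⁻¹ * α ^ 2) := by
  have hΛi : 0 < Λ⁻¹ := inv_pos.mpr hΛ
  have hc : 2 * Λ⁻¹ * α ^ 2 < 1 := by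
    have : 2 * α ^ 2 / Λ = 2 * Λ⁻¹ * α ^ 2 := by field_simp
    linarith [this ▸ hαΛ]
  set s := Real.sqrt (1 - 2 * Λ⁻¹ * α ^ 2) with hs_def
  have hpos : 0 < 1 - 2 * Λ⁻¹ * α ^ 2 := by linarith
  have hs : 0 < s := Real.sqrt_pos.mpr hpos
  have hs2 : s ^ 2 = 1 - 2 * Λ⁻¹ * α ^ 2 := Real.sq_sqrt hpos.le
  have h4 : 0 ≤ 1 - 4 * α := by linarith
  have hsp : (s * (1 - k)) ^ 2 = (1 - 2 * Λ⁻¹ * α ^ 2) * (1 - k) ^ 2 := by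
    rw [mul_pow, hs2]
  constructor
  · intro h
    have hsq : (1 - 4 * α) ^ 2 < (s * (1 - k)) ^ 2 := by nlinarith [hsp]
    have hX : 0 ≤ s * (1 - k) := mul_nonneg hs.le (by linarith)
    have key : 1 - 4 * α < s * (1 - k) := lt_of_pow_lt_pow_left₀ 2 hX hsq
    have hdiv : (1 - 4 * α) / s < 1 - k := (div_lt_iff₀ hs).mpr (by nlinarith)
    linarith
  · intro h
    have hdiv : (1 - 4 * α) / s < 1 - k := by linarith
    have key : 1 - 4 * α < s * (1 - k) := by
      have := (div_lt_iff₀ hs).mp hdiv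
      nlinarith
    have hsq : (1 - 4 * α) ^ 2 < (s * (1 - k)) ^ 2 := by nlinarith
    nlinarith [hsp]
end

section
/- Let Λ > 0 and let α satisfy 0 < α < 4/(8 + Λ⁻¹). Then 2α² < Λ, and there exists a real number k with 0 < k ≤ 1, k ≤ 4α, k ≤ 2(1 − 2α), and 2α²Λ⁻¹(1 − k)² ≤ 4(2α − k/2)(1 − 2α − k/2). -/
/-- If `0 < α < 4/(8 + Λ⁻¹)` then `2α² < Λ`, and there exists a decay exponent
`k` with `0 < k ≤ 1`, `k ≤ 4α`, `k ≤ 2(1 − 2α)`, and the discriminant condition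
`2α²Λ⁻¹(1 − k)² ≤ 4(2α − k/2)(1 − 2α − k/2)`. -/
theorem exists_decay_exponent (Λ α : ℝ) (hΛ : 0 < Λ)
    (hα0 : 0 < α) (hα1 : α < 4 / (8 + Λ⁻¹)) :
    2 * α ^ 2 < Λ ∧
      ∃ k : ℝ, 0 < k ∧ k ≤ 1 ∧ k ≤ 4 * α ∧ k ≤ 2 * (1 - 2 * α) ∧
        2 * α ^ 2 * Λ⁻¹ * (1 - k) ^ 2 ≤ 4 * (2 * α - k / 2) * (1 - 2 * α - k / 2) := by
  have hΛi : 0 < Λ⁻¹ := inv_pos.mpr hΛ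
  have hden : 0 < 8 + Λ⁻¹ := by linarith
  rw [lt_div_iff₀ hden] at hα1
  -- α * Λ⁻¹ < 4 - 8α
  have hu : α * Λ⁻¹ < 4 - 8 * α := by nlinarith
  have hαhalf : α < 1 / 2 := by nlinarith [mul_pos hα0 hΛi]
  set c : ℝ := 2 * α ^ 2 * Λ⁻¹ with hc
  have hc1 : c < 8 * α * (1 - 2 * α) := by
    have := mul_lt_mul_of_pos_left hu (by positivity : (0:ℝ) < 2 * α)
    nlinarith
  have hcle1 : c < 1 := by nlinarith [sq_nonneg (4 * α - 1)]
  have hc0 : 0 ≤ c := by positivity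
  constructor
  · have h2 : 2 * α ^ 2 * Λ⁻¹ * Λ < 1 * Λ := mul_lt_mul_of_pos_right hcle1 hΛ
    have hinv : Λ⁻¹ * Λ = 1 := inv_mul_cancel₀ (ne_of_gt hΛ)
    nlinarith
  · set ε : ℝ := 8 * α * (1 - 2 * α) - c with hε
    have hε0 : 0 < ε := by simp [hε]; linarith
    refine ⟨min 1 (min α (min (1 - 2 * α) (ε / 2))), ?_, ?_, ?_, ?_, ?_⟩
    · simp only [lt_min_iff]
      refine ⟨one_pos, hα0, by linarith, by linarith⟩
    · exact min_le_left _ _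
    · have : min 1 (min α (min (1 - 2 * α) (ε / 2))) ≤ α :=
        le_trans (min_le_right _ _) (min_le_left _ _)
      linarith
    · have : min 1 (min α (min (1 - 2 * α) (ε / 2))) ≤ 1 - 2 * α :=
        le_trans (min_le_right _ _) (le_trans (min_le_right _ _) (min_le_left _ _))
      linarith
    · set k := min 1 (min α (min (1 - 2 * α) (ε / 2))) with hk
      have hk1 : k ≤ 1 := min_le_left _ _
      have hk0 : 0 < k := by
        simp only [hk, lt_min_iff]
        refine ⟨one_pos, hα0, by linarith, by linarith⟩
      have hkε : k ≤ ε / 2 :=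
        le_trans (min_le_right _ _) (le_trans (min_le_right _ _) (min_le_right _ _))
      -- goal: c * (1-k)^2 ≤ 4 (2α - k/2)(1 - 2α - k/2)
      nlinarith [mul_nonneg (mul_nonneg hk0.le hk0.le) (by linarith : (0:ℝ) ≤ 1 - c),
        mul_nonneg hk0.le (by linarith : (0:ℝ) ≤ 2 - 2 * c), sq_nonneg k]
end

section
/- Let t₀ > 0, k > 0, M₁ > 0, and let y : ℝ → ℝ be differentiable on [t₀, ∞) with y(t) ≥ 0 for all t ≥ t₀, y′(t) ≤ −(k/t)(y(t) − M₁·y(t)^{3/2}) for all t ≥ t₀, and M₁·√(y(t₀)) < 1/2. Then for all t ≥ t₀, y(t) ≤ y(t₀) and M₁·√(y(t)) < 1/2; in particular y is nonincreasing on [t₀, ∞). -/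
lemma sub_key {M₁ x : ℝ} (hx : 0 ≤ x) (h : M₁ * Real.sqrt x < 1/2) :
    0 ≤ x - M₁ * x ^ ((3:ℝ)/2) := by
  have h32 : x ^ ((3:ℝ)/2) = x * Real.sqrt x := by
    rw [Real.sqrt_eq_rpow, show (3:ℝ)/2 = 1 + 1/2 by norm_num,
      Real.rpow_add' hx (by norm_num), Real.rpow_one]
  rw [h32, show x - M₁ * (x * Real.sqrt x) = x * (1 - M₁ * Real.sqrt x) by ring]
  exact mul_nonneg hx (by linarith)

lemma aux_mono (t₀ k M₁ : ℝ) (y y' : ℝ → ℝ)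
    (ht₀ : 0 < t₀) (hk : 0 < k) (hM₁ : 0 < M₁)
    (hderiv : ∀ t ∈ Set.Ici t₀, HasDerivAt y (y' t) t)
    (hy0 : ∀ t ∈ Set.Ici t₀, 0 ≤ y t)
    (hineq : ∀ t ∈ Set.Ici t₀, y' t ≤ -(k / t) * (y t - M₁ * y t ^ ((3 : ℝ) / 2)))
    (hinit : M₁ * Real.sqrt (y t₀) < 1 / 2) :
    ∀ t ∈ Set.Ici t₀, y t ≤ y t₀ := by
  intro T hT
  set c := y t₀ with hc
  set S : Set ℝ := {t | t ∈ Set.Icc t₀ T ∧ ∀ s ∈ Set.Icc t₀ t, y s ≤ c} with hS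
  have hne : t₀ ∈ S := ⟨⟨le_rfl, hT⟩, fun s hs => by
    have : s = t₀ := le_antisymm hs.2 hs.1
    simp [this, hc]⟩
  have hbdd : BddAbove S := ⟨T, fun x hx => hx.1.2⟩
  set u := sSup S with hu
  have hu1 : t₀ ≤ u := le_csSup hbdd hne
  have hu2 : u ≤ T := csSup_le ⟨t₀, hne⟩ fun x hx => hx.1.2
  have hlt : ∀ s, t₀ ≤ s → s < u → y s ≤ c := by
    intro s hs hsu
    obtain ⟨t, htS, hst⟩ := exists_lt_of_lt_csSup ⟨t₀, hne⟩ hsu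
    exact htS.2 s ⟨hs, le_of_lt hst⟩
  have hyu : y u ≤ c := by
    rcases eq_or_lt_of_le hu1 with h | h
    · simp [← h, hc]
    · have hcont : ContinuousAt y u := (hderiv u hu1).continuousAt
      have htend : Filter.Tendsto y (nhdsWithin u (Set.Iio u)) (nhds (y u)) :=
        hcont.continuousWithinAt.tendsto
      refine le_of_tendsto htend ?_
      filter_upwards [Ioo_mem_nhdsLT_of_mem ⟨h, le_rfl⟩] with s hs
      exact hlt s hs.1.le hs.2
  -- key smallness at u
  have hsmall : M₁ * Real.sqrt (y u) < 1 / 2 := by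
    have h1 : Real.sqrt (y u) ≤ Real.sqrt c := Real.sqrt_le_sqrt hyu
    nlinarith [Real.sqrt_nonneg (y u)]
  rcases eq_or_lt_of_le hu2 with h | h
  · rwa [h] at hyu
  · -- extend beyond u, contradiction
    exfalso
    have hcont : ContinuousAt y u := (hderiv u hu1).continuousAt
    have hcf : ContinuousAt (fun s => M₁ * Real.sqrt (y s)) u :=
      continuousAt_const.mul (Real.continuous_sqrt.continuousAt.comp hcont)
    have hev : ∀ᶠ s in nhds u, M₁ * Real.sqrt (y s) < 1 / 2 :=
      hcf.eventually (eventually_lt_nhds hsmall)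
    rw [Metric.eventually_nhds_iff] at hev
    obtain ⟨δ, hδ, hball⟩ := hev
    set ε := min (δ / 2) (T - u) with hε
    have hεpos : 0 < ε := lt_min (by linarith) (by linarith)
    have hsm : ∀ s ∈ Set.Icc u (u + ε), M₁ * Real.sqrt (y s) < 1 / 2 := by
      intro s hs
      apply hball
      rw [Real.dist_eq, abs_lt]
      constructor
      · have := hs.1; linarith
      · have := hs.2
        have : s - u ≤ ε := by linarith
        have hε2 : ε ≤ δ / 2 := min_le_left _ _
        linarith
    have hsub : Set.Icc u (u + ε) ⊆ Set.Ici t₀ := fun x hx => le_trans hu1 hx.1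
    have hanti : AntitoneOn y (Set.Icc u (u + ε)) := by
      apply antitoneOn_of_deriv_nonpos (convex_Icc _ _)
      · exact fun x hx => ((hderiv x (hsub hx)).continuousAt).continuousWithinAt
      · intro x hx
        rw [interior_Icc] at hx
        exact ((hderiv x (hsub ⟨hx.1.le, hx.2.le⟩)).differentiableAt).differentiableWithinAt
      · intro x hx
        rw [interior_Icc] at hx
        have hx' : x ∈ Set.Ici t₀ := hsub ⟨hx.1.le, hx.2.le⟩
        rw [(hderiv x hx').deriv]
        have hnn : 0 ≤ y x - M₁ * y x ^ ((3:ℝ)/2) :=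
          sub_key (hy0 x hx') (hsm x ⟨hx.1.le, hx.2.le⟩)
        have hkx : 0 < k / x := div_pos hk (lt_of_lt_of_le ht₀ hx')
        calc y' x ≤ -(k / x) * (y x - M₁ * y x ^ ((3:ℝ)/2)) := hineq x hx'
          _ ≤ 0 := mul_nonpos_of_nonpos_of_nonneg (by linarith) hnn
    have hmem : u + ε ∈ S := by
      refine ⟨⟨by linarith, by have := min_le_right (δ/2) (T - u); rw [← hε] at this; linarith⟩, ?_⟩
      intro s hs
      rcases le_or_gt s u with h' | h'
      · rcases eq_or_lt_of_le h' with h'' | h''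
        · rwa [h'']
        · exact hlt s hs.1 h''
      · calc y s ≤ y u := hanti ⟨le_rfl, by linarith⟩ ⟨h'.le, hs.2⟩ h'.le
          _ ≤ c := hyu
    have := le_csSup hbdd hmem
    rw [← hu] at this
    linarith

/-- If the total corrected energy `y` satisfies the differential inequality
`y′ ≤ −(k/t)(y − M₁ y^{3/2})` on `[t₀, ∞)` and initially `M₁ √(y(t₀)) < 1/2`, then
`y(t) ≤ y(t₀)` and `M₁ √(y(t)) < 1/2` for all `t ≥ t₀`; in particular `y` is
nonincreasing on `[t₀, ∞)`. -/
theorem corrected_energy_nonincreasing (t₀ k M₁ : ℝ) (y y' : ℝ → ℝ)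
    (ht₀ : 0 < t₀) (hk : 0 < k) (hM₁ : 0 < M₁)
    (hderiv : ∀ t ∈ Set.Ici t₀, HasDerivAt y (y' t) t)
    (hy0 : ∀ t ∈ Set.Ici t₀, 0 ≤ y t)
    (hineq : ∀ t ∈ Set.Ici t₀, y' t ≤ -(k / t) * (y t - M₁ * y t ^ ((3 : ℝ) / 2)))
    (hinit : M₁ * Real.sqrt (y t₀) < 1 / 2) :
    (∀ t ∈ Set.Ici t₀, y t ≤ y t₀ ∧ M₁ * Real.sqrt (y t) < 1 / 2) ∧
      AntitoneOn y (Set.Ici t₀) := by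
  have main : ∀ t ∈ Set.Ici t₀, y t ≤ y t₀ :=
    aux_mono t₀ k M₁ y y' ht₀ hk hM₁ hderiv hy0 hineq hinit
  have hsmall : ∀ t ∈ Set.Ici t₀, M₁ * Real.sqrt (y t) < 1 / 2 := by
    intro t ht
    have h1 : Real.sqrt (y t) ≤ Real.sqrt (y t₀) := Real.sqrt_le_sqrt (main t ht)
    nlinarith [Real.sqrt_nonneg (y t)]
  refine ⟨fun t ht => ⟨main t ht, hsmall t ht⟩, ?_⟩
  intro s hs t ht hst
  have hsub : Set.Ici s ⊆ Set.Ici t₀ := Set.Ici_subset_Ici.mpr hs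
  exact aux_mono s k M₁ y y' (lt_of_lt_of_le ht₀ hs) hk hM₁
    (fun x hx => hderiv x (hsub hx)) (fun x hx => hy0 x (hsub hx))
    (fun x hx => hineq x (hsub hx)) (hsmall s hs) t hst
end

section
/- Let t₀ > 0, k > 0, M₁ > 0, and let y : ℝ → ℝ be differentiable on [t₀, ∞) with y(t) ≥ 0 for all t ≥ t₀, y′(t) ≤ −(k/t)(y(t) − M₁·y(t)^{3/2}) for all t ≥ t₀, and M₁·√(y(t₀)) < 1/2. Then for all t ≥ t₀ one has t^k·y(t) ≤ t₀^k·y(t₀)/(1 − M₁·√(y(t₀)))². -/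
open Set Real

theorem key_lemma (t₀ k M₁ : ℝ) (y y' : ℝ → ℝ)
    (ht₀ : 0 < t₀) (hk : 0 < k) (hM₁ : 0 < M₁)
    (hderiv : ∀ t ∈ Set.Ici t₀, HasDerivAt y (y' t) t)
    (hy0 : ∀ t ∈ Set.Ici t₀, 0 ≤ y t)
    (hineq : ∀ t ∈ Set.Ici t₀, y' t ≤ -(k / t) * (y t - M₁ * y t ^ ((3 : ℝ) / 2)))
    (ε : ℝ) (hε : 0 < ε) (hsmall : (M₁ + ε) * Real.sqrt (y t₀ + ε) < 1) :
    ∀ T ∈ Set.Ici t₀,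
      T ^ k * y T ≤ t₀ ^ k * (y t₀ + ε) / (1 - (M₁ + ε) * Real.sqrt (y t₀ + ε)) ^ 2 := by
  intro T hT
  set c : ℝ := k / 2 with hc
  have hcpos : 0 < c := by positivity
  set M : ℝ := M₁ + ε with hM
  have hMpos : 0 < M := by positivity
  set s : ℝ := Real.sqrt (y t₀ + ε) with hs
  have hy₀ε : 0 < y t₀ + ε := by
    have := hy0 t₀ (le_refl t₀); linarith
  have hspos : 0 < s := Real.sqrt_pos.mpr hy₀ε
  have hssq : s ^ 2 = y t₀ + ε := Real.sq_sqrt hy₀ε.le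
  have ht₀c : (0:ℝ) < t₀ ^ (-c) := Real.rpow_pos_of_pos ht₀ _
  set A : ℝ := t₀ ^ (-c) / s with hA
  set u : ℝ → ℝ := fun x => A - M * t₀ ^ (-c) + M * x ^ (-c) with hu
  have hMs : M < s⁻¹ := by
    rw [← one_div]
    exact (lt_div_iff₀ hspos).mpr (by linarith)
  have hAMpos : 0 < A - M * t₀ ^ (-c) := by
    have : M * t₀ ^ (-c) < s⁻¹ * t₀ ^ (-c) := by
      exact mul_lt_mul_of_pos_right hMs ht₀c
    rw [hA, div_eq_inv_mul]
    linarith [this]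
  have hupos : ∀ x ∈ Icc t₀ T, 0 < u x := by
    intro x hx
    have hxpos : 0 < x := lt_of_lt_of_le ht₀ hx.1
    have : 0 < M * x ^ (-c) := by positivity
    simp only [hu]
    linarith
  -- derivative of u
  have huderiv : ∀ x ∈ Ico t₀ T, HasDerivAt u (M * (-c * x ^ (-c - 1))) x := by
    intro x hx
    have hxpos : 0 < x := lt_of_lt_of_le ht₀ hx.1
    have h1 : HasDerivAt (fun x : ℝ => x ^ (-c)) (-c * x ^ (-c - 1)) x :=
      Real.hasDerivAt_rpow_const (Or.inl hxpos.ne')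
    exact (h1.const_mul M).const_add (A - M * t₀ ^ (-c))
  -- barrier
  set B : ℝ → ℝ := fun x => (u x ^ 2)⁻¹ with hB
  set B' : ℝ → ℝ := fun x => 2 * c * M * x ^ (-c - 1) / u x ^ 3 with hB'
  have hBderiv : ∀ x ∈ Ico t₀ T, HasDerivAt B (B' x) x := by
    intro x hx
    have hux : u x ≠ 0 := (hupos x ⟨hx.1, hx.2.le⟩).ne'
    have h2 : HasDerivAt (fun x => u x ^ 2) (2 * u x ^ 1 * (M * (-c * x ^ (-c - 1)))) x := by
      simpa using (huderiv x hx).fun_pow 2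
    have h3 := h2.fun_inv (pow_ne_zero 2 hux)
    refine h3.congr_deriv ?_
    simp only [hB']
    field_simp [hB']
  -- the function f
  set f : ℝ → ℝ := fun x => x ^ k * y x with hf
  set f' : ℝ → ℝ := fun x => k * x ^ (k - 1) * y x + x ^ k * y' x with hf'
  have hfderiv : ∀ x ∈ Ico t₀ T, HasDerivAt f (f' x) x := by
    intro x hx
    have hxpos : 0 < x := lt_of_lt_of_le ht₀ hx.1
    have h1 : HasDerivAt (fun x : ℝ => x ^ k) (k * x ^ (k - 1)) x :=
      Real.hasDerivAt_rpow_const (Or.inl hxpos.ne')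
    exact h1.mul (hderiv x hx.1)
  have hfcont : ContinuousOn f (Icc t₀ T) := by
    intro x hx
    have hxpos : 0 < x := lt_of_lt_of_le ht₀ hx.1
    exact ((Real.continuousAt_rpow_const x k (Or.inl hxpos.ne')).continuousWithinAt.mul
      ((hderiv x hx.1).continuousAt.continuousWithinAt))
  -- continuity of B
  have hucont : ContinuousOn u (Icc t₀ T) := by
    intro x hx
    have hxpos : 0 < x := lt_of_lt_of_le ht₀ hx.1
    exact (continuousWithinAt_const.add (continuousWithinAt_const.mul
      (Real.continuousAt_rpow_const x (-c) (Or.inl hxpos.ne')).continuousWithinAt))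
  have hBcont : ContinuousOn B (Icc t₀ T) :=
    (hucont.pow 2).inv₀ (fun x hx => pow_ne_zero 2 (hupos x hx).ne')
  -- initial condition
  have hut₀ : u t₀ = A := by simp [hu]
  have ht₀k : (0:ℝ) < t₀ ^ k := Real.rpow_pos_of_pos ht₀ _
  have hQ2 : (t₀ ^ (-c) : ℝ) ^ 2 = t₀ ^ (-k) := by
    rw [← Real.rpow_natCast (t₀ ^ (-c)) 2, ← Real.rpow_mul ht₀.le]
    norm_num [hc]
  have ht₀kk : t₀ ^ k * t₀ ^ (-k) = 1 := by
    rw [← Real.rpow_add ht₀]; simp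
  have hQk : (t₀:ℝ) ^ (-k) = (t₀ ^ k)⁻¹ := Real.rpow_neg ht₀.le k
  have hBt₀ : B t₀ = t₀ ^ k * (y t₀ + ε) := by
    rw [hB]
    simp only [hut₀, hA]
    rw [div_pow, hQ2, hssq, hQk]
    field_simp [ht₀k.ne', hy₀ε.ne']
  have hinitial : f t₀ ≤ B t₀ := by
    rw [hBt₀]
    simp only [hf]
    exact mul_le_mul_of_nonneg_left (le_add_of_nonneg_right hε.le) ht₀k.le
  -- the touching-point bound
  have hbound : ∀ x ∈ Ico t₀ T, f x = B x → f' x < B' x := by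
    intro x hx hfx
    have hxpos : 0 < x := lt_of_lt_of_le ht₀ hx.1
    have hux : 0 < u x := hupos x ⟨hx.1, hx.2.le⟩
    set P : ℝ := x ^ c with hP
    have hPpos : 0 < P := Real.rpow_pos_of_pos hxpos _
    have hP2 : x ^ k = P ^ 2 := by
      rw [hP, ← Real.rpow_natCast (x ^ c) 2, ← Real.rpow_mul hxpos.le]
      norm_num [hc]
    have hk1 : x ^ (k - 1) = P ^ 2 * x⁻¹ := by
      rw [show k - 1 = k + (-1) by ring, Real.rpow_add hxpos, Real.rpow_neg_one, hP2]
    have hc1 : x ^ (-c - 1) = P⁻¹ * x⁻¹ := by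
      rw [show -c - 1 = -c + (-1) by ring, Real.rpow_add hxpos, Real.rpow_neg_one,
        Real.rpow_neg hxpos.le, hP]
    -- value of y at touching point
    have hyx : y x = (u x * P)⁻¹ ^ 2 := by
      have hxk : (0:ℝ) < x ^ k := Real.rpow_pos_of_pos hxpos _
      have hfx' : x ^ k * y x = (u x ^ 2)⁻¹ := hfx
      have h1 : y x = (u x ^ 2)⁻¹ * (x ^ k)⁻¹ := by
        rw [← hfx']
        field_simp
      rw [h1, hP2, mul_inv, mul_pow, inv_pow, inv_pow]
    have hypos : 0 < y x := by rw [hyx]; positivity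
    have hsy : Real.sqrt (y x) = (u x * P)⁻¹ := by
      rw [hyx, Real.sqrt_sq (by positivity)]
    have hy32 : y x ^ ((3:ℝ)/2) = y x * Real.sqrt (y x) := by
      rw [Real.sqrt_eq_rpow, ← Real.rpow_one_add' hypos.le (by norm_num)]
      norm_num
    -- the differential inequality gives: f' x ≤ k * M₁ * x^(k-1) * y x^(3/2)
    have hyineq := hineq x hx.1
    have hstep : f' x ≤ k * M₁ * x ^ (k - 1) * y x ^ ((3:ℝ)/2) := by
      rw [hf']
      have hxk : (0:ℝ) < x ^ k := Real.rpow_pos_of_pos hxpos _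
      have h2 : x ^ k * y' x ≤ x ^ k * (-(k / x) * (y x - M₁ * y x ^ ((3:ℝ)/2))) :=
        mul_le_mul_of_nonneg_left hyineq hxk.le
      have h3 : x ^ k * (k / x) = k * x ^ (k - 1) := by
        rw [hk1, hP2]; field_simp
      calc k * x ^ (k - 1) * y x + x ^ k * y' x
          ≤ k * x ^ (k - 1) * y x + x ^ k * (-(k / x) * (y x - M₁ * y x ^ ((3:ℝ)/2))) := by
            linarith
        _ = k * M₁ * x ^ (k - 1) * y x ^ ((3:ℝ)/2)
            + (k * x ^ (k - 1) - x ^ k * (k / x)) * (y x - M₁ * y x ^ ((3:ℝ)/2)) := by ring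
        _ = k * M₁ * x ^ (k - 1) * y x ^ ((3:ℝ)/2) := by rw [h3]; ring
    -- compare with B'
    refine lt_of_le_of_lt hstep ?_
    simp only [hB']
    have hrhs : 2 * c * M * x ^ (-c - 1) / u x ^ 3 = k * M * (P⁻¹ * x⁻¹) / u x ^ 3 := by
      rw [hc1, hc]; ring
    have hlhs : k * M₁ * x ^ (k - 1) * y x ^ ((3:ℝ)/2) = k * M₁ * (P⁻¹ * x⁻¹) / u x ^ 3 := by
      rw [hy32, hsy, hyx, hk1]
      field_simp
    rw [hrhs, hlhs]
    have hM₁M : M₁ < M := by rw [hM]; linarith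
    gcongr
  -- apply the comparison theorem
  have hcomp : ∀ z ∈ Icc t₀ T, f z ≤ B z :=
    fun z hz => image_le_of_deriv_right_lt_deriv_boundary' hfcont
      (fun x hx => (hfderiv x hx).hasDerivWithinAt) hinitial hBcont
      (fun x hx => (hBderiv x hx).hasDerivWithinAt) hbound hz
  have hfT : f T ≤ B T := hcomp T ⟨hT, le_refl T⟩
  -- estimate B T
  have huT : A - M * t₀ ^ (-c) ≤ u T := by
    have : 0 < M * T ^ (-c) := by
      have : 0 < T := lt_of_lt_of_le ht₀ hT
      positivity
    simp only [hu]; linarith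
  have hBT : B T ≤ ((A - M * t₀ ^ (-c)) ^ 2)⁻¹ := by
    rw [hB]
    apply inv_anti₀ (by positivity)
    exact pow_le_pow_left₀ hAMpos.le huT 2
  have h1Ms : 0 < 1 - M * s := by linarith
  have hfinal : ((A - M * t₀ ^ (-c)) ^ 2)⁻¹ = t₀ ^ k * (y t₀ + ε) / (1 - M * s) ^ 2 := by
    rw [hA]
    have hAeq : t₀ ^ (-c) / s - M * t₀ ^ (-c) = t₀ ^ (-c) * (1 - M * s) / s := by
      field_simp
    rw [hAeq, div_pow, mul_pow, hQ2, hssq, hQk]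
    field_simp [h1Ms.ne', ht₀k.ne', hy₀ε.ne']
  exact hfT.trans (hBT.trans hfinal.le)

/-- Decay estimate for the total corrected energy: if `y′ ≤ −(k/t)(y − M₁ y^{3/2})`
on `[t₀, ∞)` and `M₁ √(y(t₀)) < 1/2`, then
`t^k y(t) ≤ t₀^k y(t₀)/(1 − M₁ √(y(t₀)))²` for all `t ≥ t₀`. -/
theorem corrected_energy_decay (t₀ k M₁ : ℝ) (y y' : ℝ → ℝ)
    (ht₀ : 0 < t₀) (hk : 0 < k) (hM₁ : 0 < M₁)
    (hderiv : ∀ t ∈ Set.Ici t₀, HasDerivAt y (y' t) t)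
    (hy0 : ∀ t ∈ Set.Ici t₀, 0 ≤ y t)
    (hineq : ∀ t ∈ Set.Ici t₀, y' t ≤ -(k / t) * (y t - M₁ * y t ^ ((3 : ℝ) / 2)))
    (hinit : M₁ * Real.sqrt (y t₀) < 1 / 2) :
    ∀ t ∈ Set.Ici t₀,
      t ^ k * y t ≤ t₀ ^ k * y t₀ / (1 - M₁ * Real.sqrt (y t₀)) ^ 2 := by
  intro t ht
  set g : ℝ → ℝ := fun ε => t₀ ^ k * (y t₀ + ε) / (1 - (M₁ + ε) * Real.sqrt (y t₀ + ε)) ^ 2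
    with hg
  have hd : ContinuousAt (fun ε : ℝ => (M₁ + ε) * Real.sqrt (y t₀ + ε)) 0 := by
    exact (continuousAt_const.add continuousAt_id).mul
      (Real.continuous_sqrt.continuousAt.comp (continuousAt_const.add continuousAt_id))
  have hd0 : (fun ε : ℝ => (M₁ + ε) * Real.sqrt (y t₀ + ε)) 0 = M₁ * Real.sqrt (y t₀) := by
    simp
  have hcont : ContinuousAt g 0 := by
    apply ContinuousAt.div
    · exact continuousAt_const.mul (continuousAt_const.add continuousAt_id)
    · exact (continuousAt_const.sub hd).pow 2
    · simp only [hd0]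
      have : (0:ℝ) < 1 - M₁ * Real.sqrt (y t₀) := by linarith
      positivity
  have h0 : g 0 = t₀ ^ k * y t₀ / (1 - M₁ * Real.sqrt (y t₀)) ^ 2 := by simp [hg]
  have htend : Filter.Tendsto g (nhdsWithin 0 (Set.Ioi 0)) (nhds (g 0)) :=
    hcont.continuousWithinAt
  rw [← h0]
  refine ge_of_tendsto htend ?_
  have hev : ∀ᶠ ε in nhdsWithin (0:ℝ) (Set.Ioi 0),
      (M₁ + ε) * Real.sqrt (y t₀ + ε) < 1 := by
    have : ∀ᶠ ε in nhds (0:ℝ), (M₁ + ε) * Real.sqrt (y t₀ + ε) < 1 := by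
      apply hd.eventually_lt continuousAt_const
      simp only [add_zero]
      linarith
    exact this.filter_mono nhdsWithin_le_nhds
  filter_upwards [hev, self_mem_nhdsWithin] with ε h1 h2
  exact key_lemma t₀ k M₁ y y' ht₀ hk hM₁ hderiv hy0 hineq ε h2 h1 t ht
end

section
/- Let t₀ > 0, k > 0, M₁ > 0, and let z : ℝ → ℝ be differentiable on [t₀, ∞) with 0 < z(t) and M₁·z(t) < 1 for all t ≥ t₀, and z′(t) ≤ −(k/(2t))·z(t)·(1 − M₁·z(t)) for all t ≥ t₀. Then for all t ≥ t₀: log( z(t)·(1 − M₁·z(t₀)) / ((1 − M₁·z(t))·z(t₀)) ) + (k/2)·log(t/t₀) ≤ 0. -/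
/-- Integrated logarithmic estimate for `z = √y`: if `0 < z`, `M₁ z < 1` and
`z′ ≤ −(k/(2t)) z (1 − M₁ z)` on `[t₀, ∞)`, then for all `t ≥ t₀`,
`log( z(t)(1 − M₁ z(t₀)) / ((1 − M₁ z(t)) z(t₀)) ) + (k/2) log(t/t₀) ≤ 0`. -/
theorem bernoulli_log_estimate (t₀ k M₁ : ℝ) (z z' : ℝ → ℝ)
    (ht₀ : 0 < t₀) (hk : 0 < k) (hM₁ : 0 < M₁)
    (hderiv : ∀ t ∈ Set.Ici t₀, HasDerivAt z (z' t) t)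
    (hz0 : ∀ t ∈ Set.Ici t₀, 0 < z t)
    (hz1 : ∀ t ∈ Set.Ici t₀, M₁ * z t < 1)
    (hineq : ∀ t ∈ Set.Ici t₀, z' t ≤ -(k / (2 * t)) * z t * (1 - M₁ * z t)) :
    ∀ t ∈ Set.Ici t₀,
      Real.log (z t * (1 - M₁ * z t₀) / ((1 - M₁ * z t) * z t₀))
        + k / 2 * Real.log (t / t₀) ≤ 0 := by
  set g : ℝ → ℝ := fun t => Real.log (z t) - Real.log (1 - M₁ * z t) + k / 2 * Real.log t
    with hg
  have hb : ∀ t ∈ Set.Ici t₀, 0 < 1 - M₁ * z t := fun t ht => by linarith [hz1 t ht]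
  have htp : ∀ t ∈ Set.Ici t₀, (0:ℝ) < t := fun t ht => lt_of_lt_of_le ht₀ ht
  have hgd : ∀ t ∈ Set.Ici t₀, HasDerivAt g
      (z' t / z t - (-(M₁ * z' t)) / (1 - M₁ * z t) + k / 2 * t⁻¹) t := by
    intro t ht
    have h1 : HasDerivAt (fun s => Real.log (z s)) (z' t / z t) t :=
      (hderiv t ht).log (hz0 t ht).ne'
    have h2 : HasDerivAt (fun s => (1 : ℝ) - M₁ * z s) (-(M₁ * z' t)) t := by
      exact ((hasDerivAt_const t (1:ℝ)).sub ((hderiv t ht).const_mul M₁)).congr_deriv (by ring)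
    have h3 : HasDerivAt (fun s => Real.log (1 - M₁ * z s))
        (-(M₁ * z' t) / (1 - M₁ * z t)) t := h2.log (hb t ht).ne'
    have h4 : HasDerivAt (fun s => k / 2 * Real.log s) (k / 2 * t⁻¹) t :=
      (Real.hasDerivAt_log (htp t ht).ne').const_mul (k / 2)
    exact (h1.sub h3).add h4
  have hder_nonpos : ∀ t ∈ Set.Ici t₀,
      z' t / z t - (-(M₁ * z' t)) / (1 - M₁ * z t) + k / 2 * t⁻¹ ≤ 0 := by
    intro t ht
    have ha := hz0 t ht
    have hbt := hb t ht
    have htt := htp t ht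
    have h := hineq t ht
    have e : z' t / z t - (-(M₁ * z' t)) / (1 - M₁ * z t) + k / 2 * t⁻¹
        = (z' t + k / (2 * t) * z t * (1 - M₁ * z t)) / (z t * (1 - M₁ * z t)) := by
      have hbt' : 1 - z t * M₁ ≠ 0 := by rw [mul_comm]; exact hbt.ne'
      field_simp
      ring
    rw [e]
    apply div_nonpos_of_nonpos_of_nonneg
    · have : -(k / (2 * t)) * z t * (1 - M₁ * z t)
          = -(k / (2 * t) * z t * (1 - M₁ * z t)) := by ring
      linarith [h.trans_eq this]
    · positivity
  have hanti : AntitoneOn g (Set.Ici t₀) := by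
    apply antitoneOn_of_deriv_nonpos (convex_Ici t₀)
    · exact fun t ht => ((hgd t ht).continuousAt).continuousWithinAt
    · intro t ht
      rw [interior_Ici] at ht
      exact (hgd t (le_of_lt (Set.mem_Ioi.mp ht))).differentiableAt.differentiableWithinAt
    · intro t ht
      rw [interior_Ici] at ht
      rw [(hgd t (le_of_lt (Set.mem_Ioi.mp ht))).deriv]
      exact hder_nonpos t (le_of_lt (Set.mem_Ioi.mp ht))
  intro t ht
  have hle : g t ≤ g t₀ := hanti Set.self_mem_Ici ht ht
  have ha := hz0 t ht
  have hbt := hb t ht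
  have ha0 := hz0 t₀ Set.self_mem_Ici
  have hb0 := hb t₀ Set.self_mem_Ici
  have htt := htp t ht
  rw [Real.log_div (by positivity) (by positivity), Real.log_mul ha.ne' hb0.ne',
    Real.log_mul hbt.ne' ha0.ne', Real.log_div htt.ne' ht₀.ne']
  simp only [hg] at hle
  nlinarith [hle]
end
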